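/- Let 𝒜 and ℬ be uniform algebras on compact Hausdorff spaces X, Y and T : 𝒜⁻¹ → ℬ⁻¹ a surjective map with ‖TfTg − 1‖∞ = ‖fg − 1‖∞ for all f, g ∈ 𝒜⁻¹. Then T is injective and ‖TfTg‖∞ = ‖fg‖∞ for all f, g ∈ 𝒜⁻¹. -/
import Mathlib


/-- The peripheral spectrum of a continuous function on a compact space. -/
noncomputable def perSpec {X : Type*} [TopologicalSpace X] [CompactSpace X]
    (f : C(X, ℂ)) : Set ℂ :=
  {z | z ∈ Set.range f ∧ ‖z‖ = ‖f‖}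

/-- A peak set for a subalgebra of C(X, ℂ). -/
def IsPeakSet {X : Type*} [TopologicalSpace X] [CompactSpace X]
    (A : Subalgebra ℂ C(X, ℂ)) (E : Set X) : Prop :=
  ∃ f ∈ A, perSpec f = {1} ∧ E = f ⁻¹' {1}

/-- The Choquet boundary (set of p-points): points x such that {x} is an
intersection of peak sets. -/
def ChoquetBdry {X : Type*} [TopologicalSpace X] [CompactSpace X]
    (A : Subalgebra ℂ C(X, ℂ)) : Set X :=
  {x | ∃ P : Set (Set X), (∀ E ∈ P, IsPeakSet A E) ∧ ⋂₀ P = {x}}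


section KeyAux

variable {X Y : Type*} [TopologicalSpace X] [CompactSpace X]
    [TopologicalSpace Y] [CompactSpace Y]
    {A : Subalgebra ℂ C(X, ℂ)} {B : Subalgebra ℂ C(Y, ℂ)}

private lemma norm_one_le_one' : ‖(1 : C(X, ℂ))‖ ≤ 1 :=
  (ContinuousMap.norm_le _ zero_le_one).mpr fun x => by simp

private lemma coe_scalar_unit (c : ℂ) (hc : c ≠ 0) :
    ((((Units.map (algebraMap ℂ ↥A).toMonoidHom (Units.mk0 c hc)) : (↥A)ˣ) : ↥A) : C(X, ℂ)) = c • 1 := by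
  simp [Algebra.algebraMap_eq_smul_one]

private lemma hinv_aux (T : (↥A)ˣ → (↥B)ˣ) (hsurj : Function.Surjective T)
    (h : ∀ f g : (↥A)ˣ, ‖(((T f * T g : (↥B)ˣ) : ↥B) : C(Y, ℂ)) - 1‖
        = ‖(((f * g : (↥A)ˣ) : ↥A) : C(X, ℂ)) - 1‖) :
    ∀ q : (↥A)ˣ, T q⁻¹ = (T q)⁻¹ := by
  intro q
  obtain ⟨p, hp⟩ := hsurj (T q)⁻¹
  have h1 := h q p
  rw [hp] at h1
  have hz : ‖(((q * p : (↥A)ˣ) : ↥A) : C(X, ℂ)) - 1‖ = 0 := by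
    rw [← h1]; simp
  have hqp : (((q * p : (↥A)ˣ) : ↥A) : C(X, ℂ)) = 1 := by
    rwa [norm_sub_eq_zero_iff] at hz
  have hone : q * p = 1 := Units.ext (Subtype.ext (by simpa using hqp))
  have hpq : q⁻¹ = p := inv_eq_of_mul_eq_one_right hone
  rw [hpq, hp]

private lemma ineq_aux (T : (↥A)ˣ → (↥B)ˣ) (hsurj : Function.Surjective T)
    (h : ∀ f g : (↥A)ˣ, ‖(((T f * T g : (↥B)ˣ) : ↥B) : C(Y, ℂ)) - 1‖
        = ‖(((f * g : (↥A)ˣ) : ↥A) : C(X, ℂ)) - 1‖) :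
    ∀ f g : (↥A)ˣ, ‖(((f * g : (↥A)ˣ) : ↥A) : C(X, ℂ))‖
        ≤ ‖(((T f * T g : (↥B)ˣ) : ↥B) : C(Y, ℂ))‖ := by
  have hinv := hinv_aux T hsurj h
  intro f g
  set a := ‖(((f * g : (↥A)ˣ) : ↥A) : C(X, ℂ))‖ with ha
  set b := ‖(((T f * T g : (↥B)ˣ) : ↥B) : C(Y, ℂ))‖ with hb
  have key : ∀ n : ℕ, 1 ≤ n → (n : ℝ) * a ≤ (n : ℝ) * b + 2 := by
    intro n hn
    have hc : ((n : ℂ)) ≠ 0 := Nat.cast_ne_zero.mpr (by omega)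
    set s : (↥A)ˣ := Units.map (algebraMap ℂ ↥A).toMonoidHom (Units.mk0 (n : ℂ) hc) with hsdef
    have hs : (((s : ↥A)) : C(X, ℂ)) = (n : ℂ) • 1 := coe_scalar_unit (n : ℂ) hc
    have coe_mul : ∀ p q : (↥A)ˣ, (((p * q : (↥A)ˣ) : ↥A) : C(X, ℂ))
        = ((p : ↥A) : C(X, ℂ)) * ((q : ↥A) : C(X, ℂ)) := fun p q => rfl
    -- e2 : the "companion" W has small norm
    have hsff : s * f * f⁻¹ = s := mul_inv_cancel_right s f
    have e2 := h (s * f) f⁻¹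
    rw [hsff, hs] at e2
    set W : C(Y, ℂ) := (((T (s * f) * T f⁻¹ : (↥B)ˣ) : ↥B) : C(Y, ℂ)) with hW
    have hn1 : ‖(n : ℂ) • (1 : C(X, ℂ)) - 1‖ ≤ (n : ℝ) - 1 := by
      have : (n : ℂ) • (1 : C(X, ℂ)) - 1 = ((n : ℂ) - 1) • 1 := by
        rw [sub_smul, one_smul]
      rw [this, norm_smul]
      have hnc : ‖(n : ℂ) - 1‖ = (n : ℝ) - 1 := by
        rw [show (n : ℂ) - 1 = ((n - 1 : ℕ) : ℂ) by rw [Nat.cast_sub hn, Nat.cast_one],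
          Complex.norm_natCast, Nat.cast_sub hn, Nat.cast_one]
      rw [hnc]
      calc ((n:ℝ) - 1) * ‖(1 : C(X,ℂ))‖ ≤ ((n:ℝ) - 1) * 1 := by
            apply mul_le_mul_of_nonneg_left norm_one_le_one'
            have : (1:ℝ) ≤ n := by exact_mod_cast hn
            linarith
        _ = (n : ℝ) - 1 := mul_one _
    have hWnorm : ‖W‖ ≤ (n : ℝ) := by
      calc ‖W‖ = ‖(W - 1) + 1‖ := by ring_nf
        _ ≤ ‖W - 1‖ + ‖(1 : C(Y,ℂ))‖ := norm_add_le _ _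
        _ ≤ ((n:ℝ) - 1) + 1 := add_le_add (e2.trans_le hn1) norm_one_le_one'
        _ = (n : ℝ) := by ring
    -- decomposition
    have hdecomp : T (s * f) * T g = (T (s * f) * T f⁻¹) * (T f * T g) := by
      rw [hinv f]; group
    have coe_mulB : ∀ p q : (↥B)ˣ, (((p * q : (↥B)ˣ) : ↥B) : C(Y, ℂ))
        = ((p : ↥B) : C(Y, ℂ)) * ((q : ↥B) : C(Y, ℂ)) := fun p q => rfl
    have hcd : (((T (s * f) * T g : (↥B)ˣ) : ↥B) : C(Y, ℂ))
        = W * (((T f * T g : (↥B)ˣ) : ↥B) : C(Y, ℂ)) := by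
      rw [hdecomp]; exact coe_mulB _ _
    -- e1
    have e1 := h (s * f) g
    have hsfg : (((s * f * g : (↥A)ˣ) : ↥A) : C(X, ℂ))
        = (n : ℂ) • (((f * g : (↥A)ˣ) : ↥A) : C(X, ℂ)) := by
      rw [mul_assoc, coe_mul, hs, smul_mul_assoc, one_mul]
    rw [hsfg, hcd] at e1
    -- lower bound on LHS
    have hlow : (n : ℝ) * a - 1 ≤ ‖(n : ℂ) • (((f * g : (↥A)ˣ) : ↥A) : C(X, ℂ)) - 1‖ := by
      have h1 : ‖(n : ℂ) • (((f * g : (↥A)ˣ) : ↥A) : C(X, ℂ))‖ = (n : ℝ) * a := by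
        rw [norm_smul, Complex.norm_natCast, ← ha]
      calc (n : ℝ) * a - 1
          ≤ ‖(n : ℂ) • (((f * g : (↥A)ˣ) : ↥A) : C(X, ℂ))‖ - ‖(1 : C(X,ℂ))‖ := by
            rw [h1]; have := norm_one_le_one' (X := X); linarith
        _ ≤ ‖(n : ℂ) • (((f * g : (↥A)ˣ) : ↥A) : C(X, ℂ)) - 1‖ := norm_sub_norm_le _ _
    -- upper bound on RHS
    have hup : ‖W * (((T f * T g : (↥B)ˣ) : ↥B) : C(Y, ℂ)) - 1‖ ≤ (n : ℝ) * b + 1 := by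
      calc ‖W * (((T f * T g : (↥B)ˣ) : ↥B) : C(Y, ℂ)) - 1‖
          ≤ ‖W * (((T f * T g : (↥B)ˣ) : ↥B) : C(Y, ℂ))‖ + ‖(1 : C(Y,ℂ))‖ :=
            norm_sub_le _ _
        _ ≤ ‖W‖ * b + 1 := add_le_add (norm_mul_le _ _) norm_one_le_one'
        _ ≤ (n : ℝ) * b + 1 := by
            have hb0 : 0 ≤ b := norm_nonneg _
            nlinarith [hWnorm]
    linarith [hlow.trans (e1.symm ▸ hup)]
  -- conclude a ≤ b
  by_contra hab
  push_neg at hab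
  obtain ⟨n, hngt⟩ := exists_nat_gt (2 / (a - b))
  have hd : 0 < a - b := by linarith
  have h2 : 2 < (n : ℝ) * (a - b) := (div_lt_iff₀ hd).mp hngt
  have hn1 : 1 ≤ n := by
    by_contra hn0
    have : n = 0 := by omega
    rw [this] at h2; norm_num at h2
  have := key n hn1
  nlinarith

end KeyAux

theorem stmt14 {X Y : Type*} [TopologicalSpace X] [CompactSpace X]
    [TopologicalSpace Y] [CompactSpace Y]
    (A : Subalgebra ℂ C(X, ℂ)) (B : Subalgebra ℂ C(Y, ℂ))
    (hA : IsClosed (A : Set C(X, ℂ))) (hB : IsClosed (B : Set C(Y, ℂ)))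
    (hAsep : ∀ x x' : X, x ≠ x' → ∃ f ∈ A, f x ≠ f x')
    (hBsep : ∀ y y' : Y, y ≠ y' → ∃ g ∈ B, g y ≠ g y')
    (T : (↥A)ˣ → (↥B)ˣ) (hsurj : Function.Surjective T)
    (h : ∀ f g : (↥A)ˣ, ‖(((T f * T g : (↥B)ˣ) : ↥B) : C(Y, ℂ)) - 1‖
        = ‖(((f * g : (↥A)ˣ) : ↥A) : C(X, ℂ)) - 1‖) :
    Function.Injective T ∧
    ∀ f g : (↥A)ˣ, ‖(((T f * T g : (↥B)ˣ) : ↥B) : C(Y, ℂ))‖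
        = ‖(((f * g : (↥A)ˣ) : ↥A) : C(X, ℂ))‖ := by
  have hinv := hinv_aux T hsurj h
  have hinj : Function.Injective T := by
    intro f g hfg
    have h1 := h f g⁻¹
    rw [hinv g, hfg] at h1
    have hz : ‖(((f * g⁻¹ : (↥A)ˣ) : ↥A) : C(X, ℂ)) - 1‖ = 0 := by
      rw [← h1]; simp
    have hfg1 : (((f * g⁻¹ : (↥A)ˣ) : ↥A) : C(X, ℂ)) = 1 := by
      rwa [norm_sub_eq_zero_iff] at hz
    have hone : f * g⁻¹ = 1 := Units.ext (Subtype.ext (by simpa using hfg1))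
    exact mul_inv_eq_one.mp hone
  refine ⟨hinj, fun f g => ?_⟩
  have hle := ineq_aux T hsurj h f g
  -- reverse direction via the inverse map
  set e : (↥A)ˣ ≃ (↥B)ˣ := Equiv.ofBijective T ⟨hinj, hsurj⟩ with he
  have h' : ∀ u v : (↥B)ˣ,
      ‖(((e.symm u * e.symm v : (↥A)ˣ) : ↥A) : C(X, ℂ)) - 1‖
        = ‖(((u * v : (↥B)ˣ) : ↥B) : C(Y, ℂ)) - 1‖ := by
    intro u v
    have hu : T (e.symm u) = u := e.apply_symm_apply u
    have hv : T (e.symm v) = v := e.apply_symm_apply v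
    have := h (e.symm u) (e.symm v)
    rw [hu, hv] at this
    exact this.symm
  have hge := ineq_aux (fun u => e.symm u) e.symm.surjective h' (T f) (T g)
  have hf' : e.symm (T f) = f := e.symm_apply_apply f
  have hg' : e.symm (T g) = g := e.symm_apply_apply g
  rw [hf', hg'] at hge
  exact le_antisymm hge hle
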